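/- arXiv:2405.15043 — 2 statements merged into one kernel-verified Lean document; each statement's English description precedes it below -/
import Mathlib

section
/- For α, β > -1, κ a positive integer, and nonnegative integer n, the bivariate Jacobi–Konhauser polynomial P_n^{(α,β),κ}(x,y) := (Γ(1+α+n)/n!) Σ_{s=0}^{n} Σ_{r=0}^{n-s} [(-n)_{s+r} (1+α+β+n)_s / (s! r! Γ(1+α+s) Γ(β+1+κr))] ((1-x)/2)^s y^{κr} can be rewritten as Γ(1+α+n) Σ_{s=0}^{n} [(-1)^s (1+α+β+n)_s / (s! Γ(1+α+s) Γ(1+β+κn-κs))] ((1-x)/2)^s Z_{n-s}^{β}(y;κ), where Z_m^{β}(y;κ) := (Γ(1+β+κm)/m!) Σ_{r=0}^{m} (-m)_r y^{κr} / (r! Γ(β+1+κr)) is the Konhauser polynomial. -/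
/-- Pochhammer symbol (rising factorial) on ℝ. -/
noncomputable def poch (a : ℝ) (k : ℕ) : ℝ := ∏ i ∈ Finset.range k, (a + i)

/-- Konhauser polynomial Z_m^β(y;κ). -/
noncomputable def konhauserZ (β : ℝ) (κ m : ℕ) (y : ℝ) : ℝ :=
  (Real.Gamma (1 + β + κ * m) / m.factorial) *
    ∑ r ∈ Finset.range (m + 1),
      poch (-(m : ℝ)) r * y ^ (κ * r) / (r.factorial * Real.Gamma (β + 1 + κ * r))

/-- Bivariate Jacobi–Konhauser polynomial. -/
noncomputable def JK (α β : ℝ) (κ n : ℕ) (x y : ℝ) : ℝ :=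
  (Real.Gamma (1 + α + n) / n.factorial) *
    ∑ s ∈ Finset.range (n + 1), ∑ r ∈ Finset.range (n - s + 1),
      poch (-(n : ℝ)) (s + r) * poch (1 + α + β + n) s /
          (s.factorial * r.factorial * Real.Gamma (1 + α + s) * Real.Gamma (β + 1 + κ * r)) *
        ((1 - x) / 2) ^ s * y ^ (κ * r)

lemma poch_split (a : ℝ) (s r : ℕ) : poch a (s + r) = poch a s * poch (a + s) r := by
  unfold poch
  rw [Finset.prod_range_add]
  congr 1
  refine Finset.prod_congr rfl fun i _ => ?_
  push_cast; ring

lemma poch_neg_nat (n s : ℕ) (h : s ≤ n) :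
    ((n - s).factorial : ℝ) * poch (-(n : ℝ)) s = (-1) ^ s * n.factorial := by
  induction s with
  | zero => simp [poch]
  | succ s ih =>
    have hs : s ≤ n := Nat.le_of_succ_le h
    have hm : n - s = (n - (s + 1)) + 1 := by omega
    have hcast : -(n : ℝ) + s = -(((n - (s + 1)) : ℕ) + 1 : ℝ) := by
      have : ((n - (s + 1) : ℕ) : ℝ) = (n : ℝ) - (s + 1) := by
        push_cast [Nat.cast_sub h]; ring
      rw [this]; ring
    have key := ih hs
    rw [hm] at key
    have hp : poch (-(n : ℝ)) (s + 1) = poch (-(n : ℝ)) s * (-(n : ℝ) + s) := by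
      unfold poch; rw [Finset.prod_range_succ]
    rw [hp, hcast, pow_succ]
    rw [Nat.factorial_succ] at key
    push_cast at key ⊢
    nlinarith [key]

theorem stmt0 (α β : ℝ) (hα : -1 < α) (hβ : -1 < β) (κ : ℕ) (hκ : 1 ≤ κ) (n : ℕ)
    (x y : ℝ) :
    JK α β κ n x y =
      Real.Gamma (1 + α + n) *
        ∑ s ∈ Finset.range (n + 1),
          (-1 : ℝ) ^ s * poch (1 + α + β + n) s /
              (s.factorial * Real.Gamma (1 + α + s) * Real.Gamma (1 + β + κ * (n - s))) *
            ((1 - x) / 2) ^ s * konhauserZ β κ (n - s) y := by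
  unfold JK konhauserZ
  simp only [Finset.mul_sum]
  refine Finset.sum_congr rfl fun s hs => ?_
  have hsn : s ≤ n := Nat.lt_succ_iff.mp (Finset.mem_range.mp hs)
  refine Finset.sum_congr rfl fun r hr => ?_
  have hcast : ((n - s : ℕ) : ℝ) = (n : ℝ) - s := Nat.cast_sub hsn
  have hns : (0:ℝ) ≤ (n:ℝ) - s := by
    rw [← hcast]; positivity
  have hΓ' : Real.Gamma (1 + β + κ * ((n:ℝ) - s)) ≠ 0 := by
    refine (Real.Gamma_pos_of_pos ?_).ne'
    have h0 : (0:ℝ) ≤ (κ:ℝ) * ((n:ℝ) - s) := mul_nonneg (by positivity) hns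
    linarith
  have hΓb : Real.Gamma (β + 1 + κ * r) ≠ 0 := by
    refine (Real.Gamma_pos_of_pos ?_).ne'
    have h0 : (0:ℝ) ≤ (κ:ℝ) * r := by positivity
    linarith
  have hΓa : Real.Gamma (1 + α + s) ≠ 0 := by
    refine (Real.Gamma_pos_of_pos ?_).ne'
    have h0 : (0:ℝ) ≤ (s:ℝ) := by positivity
    linarith
  have hnf : ((n.factorial : ℝ)) ≠ 0 := Nat.cast_ne_zero.mpr n.factorial_ne_zero
  have hnsf : (((n - s).factorial : ℝ)) ≠ 0 := Nat.cast_ne_zero.mpr (n - s).factorial_ne_zero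
  have hsf : ((s.factorial : ℝ)) ≠ 0 := Nat.cast_ne_zero.mpr s.factorial_ne_zero
  have hrf : ((r.factorial : ℝ)) ≠ 0 := Nat.cast_ne_zero.mpr r.factorial_ne_zero
  have hpoch : poch (-(n : ℝ)) s = (-1) ^ s * n.factorial / (n - s).factorial := by
    rw [eq_div_iff hnsf]
    linear_combination poch_neg_nat n s hsn
  have hZ : -(((n - s : ℕ)) : ℝ) = -(n : ℝ) + s := by rw [hcast]; ring
  rw [poch_split, hZ, hpoch]
  simp only [hcast]
  field_simp
end

section
/- Let α, β, γ₁, γ₂, w₁, w₂, δ, σ ∈ ℂ with Re(α), Re(β), Re(δ), Re(σ) > 0, κ a positive integer, |w₂/σ| < 1, |w₁ σ^κ/(δ(σ^κ - w₂^κ))| sufficiently small, and suppose γ₁ is a nonpositive integer (so the ₂F₀ series terminates). Then ∫_{-∞}^y ∫_{-∞}^x (x-t)^{α-1}(y-u)^{β-1} E_{α,β,κ}^{(γ₁;γ₂)}(w₁(x-t), w₂(y-u)) e^{δt + σu} dt du = δ^{-α} σ^{-β} e^{δx + σy} (1 - (w₂/σ)^κ)^{-γ₁} Σ_{s} (γ₁)_s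 (γ₂)_s / s! · (σ^κ w₁/(δ(σ^κ - w₂^κ)))^s. -/
open MeasureTheory Set Complex Filter

/-- Pochhammer symbol (rising factorial) on ℂ. -/
noncomputable def pochC (a : ℂ) (k : ℕ) : ℂ := ∏ i ∈ Finset.range k, (a + i)

/-- Bivariate Jacobi–Konhauser Mittag-Leffler function (κ a natural number). -/
noncomputable def JKML (α β γ₁ γ₂ : ℂ) (κ : ℕ) (x y : ℂ) : ℂ :=
  ∑' s : ℕ, ∑' r : ℕ,
    pochC γ₁ (r + s) * pochC γ₂ s * x ^ s * y ^ (κ * r) /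
      (r.factorial * s.factorial * Complex.Gamma (α + s) * Complex.Gamma (β + κ * r))

lemma measAux (a d : ℂ) : AEStronglyMeasurable
    (fun t : ℝ => (t:ℂ) ^ (a - 1) * Complex.exp (-(d * t)))
    (volume.restrict (Ioi (0:ℝ))) := by
  apply ContinuousOn.aestronglyMeasurable ?_ measurableSet_Ioi
  apply ContinuousOn.mul
  · exact fun t ht => (continuousAt_ofReal_cpow_const t (a-1)
      (Or.inr (ne_of_gt (mem_Ioi.mp ht)))).continuousWithinAt
  · exact (Complex.continuous_exp.comp ((continuous_const.mul continuous_ofReal).neg)).continuousOn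

lemma intOn (z : ℂ) (hz : -1 < z.re) (d : ℂ) (hd : 0 < d.re) :
    IntegrableOn (fun t : ℝ => (t:ℂ) ^ z * Complex.exp (-(d * t))) (Ioi 0) := by
  have hg : IntegrableOn (fun t : ℝ => t ^ z.re * Real.exp (-d.re * t)) (Ioi 0) := by
    have := integrableOn_rpow_mul_exp_neg_mul_rpow (p := 1) hz zero_lt_one hd
    simpa using this
  refine hg.integrable.mono' ?_ ?_
  · apply ContinuousOn.aestronglyMeasurable ?_ measurableSet_Ioi
    apply ContinuousOn.mul
    · exact fun t ht => (continuousAt_ofReal_cpow_const t z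
        (Or.inr (ne_of_gt (mem_Ioi.mp ht)))).continuousWithinAt
    · exact (Complex.continuous_exp.comp ((continuous_const.mul continuous_ofReal).neg)).continuousOn
  · filter_upwards [self_mem_ae_restrict measurableSet_Ioi] with t ht
    rw [mem_Ioi] at ht
    rw [norm_mul, Complex.norm_cpow_eq_rpow_re_of_pos ht, Complex.norm_exp]
    simp [neg_mul]

lemma Lkey (a : ℂ) (ha : 0 < a.re) (d : ℂ) (hd : 0 < d.re) :
    ∫ t in Ioi (0:ℝ), (t:ℂ) ^ (a - 1) * Complex.exp (-(d * t)) = d ^ (-a) * Complex.Gamma a := by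
  have hare : -1 < (a - 1).re := by simp [Complex.sub_re]; linarith
  set U : Set ℂ := {z | 0 < z.re} with hUdef
  have hUopen : IsOpen U := isOpen_lt continuous_const Complex.continuous_re
  set F : ℂ → ℂ := fun d => ∫ t in Ioi (0:ℝ), (t:ℂ) ^ (a - 1) * Complex.exp (-(d * t)) with hF
  set G : ℂ → ℂ := fun d => d ^ (-a) * Complex.Gamma a with hG
  have hFdiff : ∀ d₀ ∈ U, DifferentiableAt ℂ F d₀ := by
    intro d₀ hd₀
    have hd₀' : 0 < d₀.re := hd₀
    set ε := d₀.re / 2 with hε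
    have hεpos : 0 < ε := by positivity
    have hbnd : IntegrableOn (fun t : ℝ => t ^ a.re * Real.exp (-(ε * t))) (Ioi 0) := by
      have := integrableOn_rpow_mul_exp_neg_mul_rpow (p := 1) (s := a.re) (by linarith) zero_lt_one hεpos
      simpa [neg_mul] using this
    have key := hasDerivAt_integral_of_dominated_loc_of_deriv_le
      (μ := volume.restrict (Ioi (0:ℝ)))
      (F := fun d (t:ℝ) => (t:ℂ) ^ (a - 1) * Complex.exp (-(d * t)))
      (F' := fun d (t:ℝ) => (t:ℂ) ^ (a - 1) * (Complex.exp (-(d * t)) * -(t:ℂ)))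
      (x₀ := d₀) (bound := fun t : ℝ => t ^ a.re * Real.exp (-(ε * t))) (Metric.ball_mem_nhds d₀ hεpos)
      (Eventually.of_forall (fun d => measAux a d)) ((intOn (a-1) hare d₀ hd₀').integrable) ?_ ?_
      hbnd.integrable ?_
    · exact key.2.differentiableAt
    · apply ContinuousOn.aestronglyMeasurable ?_ measurableSet_Ioi
      apply ContinuousOn.mul
      · exact fun t ht => (continuousAt_ofReal_cpow_const t (a-1)
          (Or.inr (ne_of_gt (mem_Ioi.mp ht)))).continuousWithinAt
      · exact ((Complex.continuous_exp.comp
          ((continuous_const.mul continuous_ofReal).neg)).mul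
          continuous_ofReal.neg).continuousOn
    · filter_upwards [self_mem_ae_restrict measurableSet_Ioi] with t ht
      rw [mem_Ioi] at ht
      intro d hdball
      have hdre : ε ≤ d.re := by
        have h1 : |(d - d₀).re| ≤ ‖d - d₀‖ := Complex.abs_re_le_norm _
        have h2 : ‖d - d₀‖ < ε := by
          rwa [Metric.mem_ball, Complex.dist_eq] at hdball
        have := (abs_le.mp h1).1
        simp only [Complex.sub_re] at this
        linarith
      rw [norm_mul, norm_mul, Complex.norm_cpow_eq_rpow_re_of_pos ht, Complex.norm_exp, norm_neg,
        Complex.norm_real, Real.norm_eq_abs, abs_of_pos ht]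
      have h3 : t ^ (a-1).re * (Real.exp ((-(d * (t:ℂ))).re) * t)
          = t ^ a.re * Real.exp (-(d.re * t)) := by
        rw [show (a-1).re = a.re - 1 by simp [Complex.sub_re]]
        rw [Real.rpow_sub ht, Real.rpow_one]
        have h4 : ((-(d * (t:ℂ)))).re = -(d.re * t) := by simp [Complex.mul_re]
        rw [h4, Real.exp_neg]
        field_simp
      rw [h3]
      gcongr
    · filter_upwards with t
      intro d hdball
      have h1 : HasDerivAt (fun d : ℂ => -(d * (t:ℂ))) (-(t:ℂ)) d := by
        simpa using ((hasDerivAt_id d).mul_const (t:ℂ)).fun_neg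
      exact (h1.cexp).const_mul _
  have hGdiff : ∀ d₀ ∈ U, DifferentiableAt ℂ G d₀ := by
    intro d₀ hd₀
    exact (differentiableAt_id.cpow (differentiableAt_const (-a)) (Or.inl hd₀)).mul_const _
  have hFA : AnalyticOnNhd ℂ F U :=
    DifferentiableOn.analyticOnNhd (fun d hd => (hFdiff d hd).differentiableWithinAt) hUopen
  have hGA : AnalyticOnNhd ℂ G U :=
    DifferentiableOn.analyticOnNhd (fun d hd => (hGdiff d hd).differentiableWithinAt) hUopen
  have hpre : IsPreconnected U := (convex_halfSpace_re_gt 0).isPreconnected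
  have hreal : ∀ r : ℝ, 0 < r → F r = G r := by
    intro r hr
    have := Complex.integral_cpow_mul_exp_neg_mul_Ioi ha hr
    simp only [hF, hG]
    rw [this]
    congr 1
    rw [Complex.cpow_neg, ← Complex.inv_cpow _ _ (by
      rw [Complex.arg_ofReal_of_nonneg hr.le]; exact Real.pi_ne_zero.symm), one_div]
  have hfreq : ∃ᶠ z in nhdsWithin (1:ℂ) {(1:ℂ)}ᶜ, F z = G z := by
    have htend : Tendsto (fun k : ℕ => ((1 + 1/(k+1) : ℝ) : ℂ)) atTop
        (nhdsWithin (1:ℂ) {(1:ℂ)}ᶜ) := by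
      apply tendsto_nhdsWithin_of_tendsto_nhds_of_eventually_within
      · have : Tendsto (fun k : ℕ => (1 + 1/(k+1) : ℝ)) atTop (nhds 1) := by
          simpa using (tendsto_const_nhds (x := (1:ℝ))).add tendsto_one_div_add_atTop_nhds_zero_nat
        exact (Complex.continuous_ofReal.tendsto 1).comp this
      · filter_upwards with k
        simp only [mem_compl_iff, mem_singleton_iff]
        intro h
        have : (1 + 1/(k+1) : ℝ) = 1 := by exact_mod_cast h
        have hpos : (0:ℝ) < 1/(k+1) := by positivity
        linarith
    apply htend.frequently
    apply Frequently.of_forall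
    intro k
    exact hreal _ (by positivity)
  have := hFA.eqOn_of_preconnected_of_frequently_eq hGA hpre (show (1:ℂ) ∈ U by simp [hUdef]) hfreq
  exact this hd

lemma L4_int (a : ℂ) (ha : 0 < a.re) (d : ℂ) (hd : 0 < d.re) (x : ℝ) :
    IntegrableOn (fun t : ℝ => ((x:ℂ) - t) ^ (a - 1) * Complex.exp (d * t)) (Iio x) := by
  have hemb : MeasurableEmbedding (fun t : ℝ => x - t) := (Homeomorph.subLeft x).measurableEmbedding
  have hmp : MeasurePreserving (fun t : ℝ => x - t) (volume : Measure ℝ) volume :=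
    Measure.measurePreserving_sub_left volume x
  have hpre : (fun t : ℝ => x - t) ⁻¹' (Iio x) = Ioi 0 := by
    ext t; simp [sub_lt_iff_lt_add]
  have base : IntegrableOn (fun v : ℝ => (v:ℂ) ^ (a-1) * Complex.exp (-(d * v))) (Ioi 0) :=
    intOn (a-1) (by simp [Complex.sub_re]; linarith) d hd
  have base2 : IntegrableOn
      (fun v : ℝ => Complex.exp (d * x) * ((v:ℂ) ^ (a-1) * Complex.exp (-(d * v)))) (Ioi 0) :=
    base.const_mul _
  have heq : ∀ v : ℝ, ((x:ℂ) - (((x - v : ℝ)):ℂ)) ^ (a-1) * Complex.exp (d * (((x - v : ℝ)):ℂ)) =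
      Complex.exp (d * x) * ((v:ℂ) ^ (a-1) * Complex.exp (-(d * v))) := by
    intro v
    have e1 : (x:ℂ) - (((x - v : ℝ)):ℂ) = (v:ℂ) := by push_cast; ring
    have e2 : d * (((x - v : ℝ)):ℂ) = d * x + -(d * v) := by push_cast; ring
    rw [e1, e2, Complex.exp_add]
    ring
  have := (hmp.integrableOn_comp_preimage hemb
    (f := fun t : ℝ => ((x:ℂ) - t) ^ (a - 1) * Complex.exp (d * t)) (s := Iio x)).mp
  rw [hpre] at this
  apply this
  exact base2.congr_fun (fun v hv => (heq v).symm) measurableSet_Ioi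

lemma L4 (a : ℂ) (ha : 0 < a.re) (d : ℂ) (hd : 0 < d.re) (x : ℝ) :
    ∫ t in Iio x, ((x:ℂ) - t) ^ (a - 1) * Complex.exp (d * t)
      = d ^ (-a) * Complex.Gamma a * Complex.exp (d * x) := by
  have hemb : MeasurableEmbedding (fun t : ℝ => x - t) := (Homeomorph.subLeft x).measurableEmbedding
  have hmp : MeasurePreserving (fun t : ℝ => x - t) (volume : Measure ℝ) volume :=
    Measure.measurePreserving_sub_left volume x
  have hpre : (fun t : ℝ => x - t) ⁻¹' (Iio x) = Ioi 0 := by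
    ext t; simp [sub_lt_iff_lt_add]
  have h := hmp.setIntegral_preimage_emb hemb
    (fun t : ℝ => ((x:ℂ) - t) ^ (a - 1) * Complex.exp (d * t)) (Iio x)
  rw [hpre] at h
  rw [← h]
  have heq : ∀ v : ℝ, ((x:ℂ) - (((x - v : ℝ)):ℂ)) ^ (a-1) * Complex.exp (d * (((x - v : ℝ)):ℂ)) =
      Complex.exp (d * x) * ((v:ℂ) ^ (a-1) * Complex.exp (-(d * v))) := by
    intro v
    have e1 : (x:ℂ) - (((x - v : ℝ)):ℂ) = (v:ℂ) := by push_cast; ring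
    have e2 : d * (((x - v : ℝ)):ℂ) = d * x + -(d * v) := by push_cast; ring
    rw [e1, e2, Complex.exp_add]
    ring
  calc ∫ v in Ioi (0:ℝ), ((x:ℂ) - (((x - v:ℝ)):ℂ)) ^ (a-1) * Complex.exp (d * (((x - v:ℝ)):ℂ))
      = ∫ v in Ioi (0:ℝ), Complex.exp (d * x) * ((v:ℂ) ^ (a-1) * Complex.exp (-(d * v))) := by
        exact setIntegral_congr_fun measurableSet_Ioi (fun v _ => heq v)
    _ = Complex.exp (d * x) * ∫ v in Ioi (0:ℝ), (v:ℂ) ^ (a-1) * Complex.exp (-(d * v)) :=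
        integral_const_mul _ _
    _ = d ^ (-a) * Complex.Gamma a * Complex.exp (d * x) := by rw [Lkey a ha d hd]; ring

lemma poch_succ (a : ℂ) (k : ℕ) : pochC a (k+1) = pochC a k * (a + k) :=
  Finset.prod_range_succ _ _

lemma poch_add (a : ℂ) (s r : ℕ) : pochC a (s + r) = pochC a s * pochC (a + s) r := by
  unfold pochC
  rw [Finset.prod_range_add]
  congr 1
  refine Finset.prod_congr rfl fun i _ => ?_
  push_cast
  ring

lemma poch_neg_nat_s13 (n k : ℕ) : pochC (-(n:ℂ)) k = (-1)^k * k.factorial * n.choose k := by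
  induction k with
  | zero => simp [pochC]
  | succ k ih =>
    rw [poch_succ, ih]
    rcases lt_or_ge k n with hk | hk
    · have hc : (n.choose (k+1) : ℂ) * (k+1) = (n.choose k : ℂ) * ((n:ℂ) - k) := by
        have := Nat.choose_succ_right_eq n k
        have hcast : ((n.choose (k+1) * (k+1) : ℕ) : ℂ) = ((n.choose k * (n - k) : ℕ) : ℂ) := by
          exact_mod_cast congrArg (Nat.cast : ℕ → ℂ) this
        push_cast [Nat.cast_sub hk.le] at hcast
        linear_combination hcast
      push_cast [Nat.factorial_succ]
      have h2 : (-(n:ℂ) + k) = -((n:ℂ) - k) := by ring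
      rw [h2]
      field_simp
      linear_combination ((-1:ℂ)^k * (k.factorial:ℂ)) * hc
    · have h1 : n.choose (k+1) = 0 := Nat.choose_eq_zero_of_lt (by omega)
      rcases eq_or_lt_of_le hk with rfl | hk'
      · simp [h1]
      · have h2 : n.choose k = 0 := Nat.choose_eq_zero_of_lt hk'
        simp [h1, h2]

lemma poch_zero_of_lt {n k : ℕ} (h : n < k) : pochC (-(n:ℂ)) k = 0 := by
  rw [poch_neg_nat_s13, Nat.choose_eq_zero_of_lt h]
  simp

lemma binom (m N : ℕ) (h : m ≤ N) (z : ℂ) :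
    ∑ r ∈ Finset.range (N+1), pochC (-(m:ℂ)) r * z ^ r / r.factorial = (1 - z) ^ m := by
  have hsub : ∑ r ∈ Finset.range (N+1), pochC (-(m:ℂ)) r * z ^ r / r.factorial
      = ∑ r ∈ Finset.range (m+1), pochC (-(m:ℂ)) r * z ^ r / r.factorial := by
    symm
    apply Finset.sum_subset
    · exact Finset.range_subset_range.mpr (by omega)
    · intro r _ hr
      rw [Finset.mem_range, not_lt] at hr
      rw [poch_zero_of_lt (by omega)]
      simp
  rw [hsub]
  have hbin := add_pow (-z) 1 m
  simp only [one_pow, mul_one] at hbin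
  rw [show (1:ℂ) - z = -z + 1 by ring, hbin]
  refine Finset.sum_congr rfl fun r hr => ?_
  rw [poch_neg_nat_s13]
  have hfac : (r.factorial : ℂ) ≠ 0 := by exact_mod_cast r.factorial_ne_zero
  field_simp
  ring

lemma alg (n : ℕ) (γ₂ A z : ℂ) (hz : (1:ℂ) - z ≠ 0) :
    ∑ s ∈ Finset.range (n+1), ∑ r ∈ Finset.range (n+1),
      pochC (-(n:ℂ)) (r+s) * pochC γ₂ s / ((r.factorial : ℂ) * s.factorial) * A ^ s * z ^ r
    = (1-z) ^ n * ∑ s ∈ Finset.range (n+1),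
        pochC (-(n:ℂ)) s * pochC γ₂ s / (s.factorial : ℂ) * (A/(1-z)) ^ s := by
  rw [Finset.mul_sum]
  refine Finset.sum_congr rfl fun s hs => ?_
  rw [Finset.mem_range] at hs
  have hsn : s ≤ n := by omega
  set m := n - s with hm
  have hmn : m ≤ n := by omega
  have hcast : (-(n:ℂ)) + s = -(m:ℂ) := by
    have : ((m:ℂ)) = (n:ℂ) - s := by
      rw [hm]; push_cast [Nat.cast_sub hsn]; ring
    rw [this]; ring
  have step1 : ∀ r : ℕ, pochC (-(n:ℂ)) (r+s) = pochC (-(n:ℂ)) s * pochC (-(m:ℂ)) r := by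
    intro r
    rw [add_comm r s, poch_add, hcast]
  have step2 : ∑ r ∈ Finset.range (n+1),
      pochC (-(n:ℂ)) (r+s) * pochC γ₂ s / ((r.factorial : ℂ) * s.factorial) * A ^ s * z ^ r
      = (pochC (-(n:ℂ)) s * pochC γ₂ s / (s.factorial : ℂ) * A ^ s) *
        ∑ r ∈ Finset.range (n+1), pochC (-(m:ℂ)) r * z ^ r / r.factorial := by
    rw [Finset.mul_sum]
    refine Finset.sum_congr rfl fun r _ => ?_
    rw [step1 r]
    have h1 : ((r.factorial : ℂ)) ≠ 0 := by exact_mod_cast r.factorial_ne_zero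
    have h2 : ((s.factorial : ℂ)) ≠ 0 := by exact_mod_cast s.factorial_ne_zero
    field_simp
  rw [step2, binom m n hmn z]
  have hpow : (1-z) ^ n = (1-z) ^ m * (1-z) ^ s := by
    rw [← pow_add]; congr 1; omega
  rw [hpow, div_pow]
  have h3 : ((1:ℂ)-z) ^ s ≠ 0 := pow_ne_zero _ hz
  field_simp

lemma cpow_combine (b : ℂ) (hb : b ≠ 0) (c e : ℂ) (k : ℕ) (he : e = (k:ℂ)) :
    b ^ (c - 1) * b ^ k = b ^ ((c + e) - 1) := by
  rw [he, show (c + (k:ℂ)) - 1 = (c - 1) + (k:ℂ) by ring, Complex.cpow_add _ _ hb,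
    Complex.cpow_natCast]

lemma cpow_neg_add (b : ℂ) (hb : b ≠ 0) (c e : ℂ) (k : ℕ) (he : e = (k:ℂ)) :
    b ^ (-(c + e)) = b ^ (-c) * (b ^ k)⁻¹ := by
  rw [he, show -(c + (k:ℂ)) = -c + -(k:ℂ) by ring, Complex.cpow_add _ _ hb]
  congr 1
  rw [Complex.cpow_neg, Complex.cpow_natCast]

lemma cancel_aux {N Da ds g1 Ex Sb sr g2 Ey fr fs : ℂ} (hg1 : g1 ≠ 0) (hg2 : g2 ≠ 0)
    (hfr : fr ≠ 0) (hfs : fs ≠ 0) (hds : ds ≠ 0) (hsr : sr ≠ 0) :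
    N / (fr * fs * g1 * g2) * (Da * ds⁻¹ * g1 * Ex) * (Sb * sr⁻¹ * g2 * Ey)
      = (Da * Sb * Ex * Ey) * (N / (fr * fs) * ds⁻¹ * sr⁻¹) := by
  field_simp

theorem stmt13 (α β γ₁ γ₂ w₁ w₂ δ σ : ℂ) (κ : ℕ) (hκ : 1 ≤ κ)
    (hα : 0 < α.re) (hβ : 0 < β.re) (hδ : 0 < δ.re) (hσ : 0 < σ.re)
    (h1 : ‖w₂ / σ‖ < 1)
    (h2 : ‖w₁ * σ ^ κ / (δ * (σ ^ κ - w₂ ^ κ))‖ < 1)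
    (hγ₁ : ∃ n : ℕ, γ₁ = -(n : ℂ)) (x y : ℝ) :
    (∫ u in Set.Iio y, ∫ t in Set.Iio x,
        ((x : ℂ) - t) ^ (α - 1) * ((y : ℂ) - u) ^ (β - 1) *
          JKML α β γ₁ γ₂ κ (w₁ * ((x : ℂ) - t)) (w₂ * ((y : ℂ) - u)) *
          Complex.exp (δ * t + σ * u)) =
      δ ^ (-α) * σ ^ (-β) * Complex.exp (δ * x + σ * y) *
        (1 - (w₂ / σ) ^ κ) ^ (-γ₁) *
        ∑' s : ℕ, pochC γ₁ s * pochC γ₂ s / s.factorial *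
          (σ ^ κ * w₁ / (δ * (σ ^ κ - w₂ ^ κ))) ^ s := by
  obtain ⟨n, rfl⟩ := hγ₁
  have hδ0 : δ ≠ 0 := fun h => by rw [h] at hδ; simp at hδ
  have hσ0 : σ ≠ 0 := fun h => by rw [h] at hσ; simp at hσ
  have hκ0 : κ ≠ 0 := by omega
  have hσκ : σ ^ κ ≠ 0 := pow_ne_zero _ hσ0
  set z : ℂ := w₂ ^ κ / σ ^ κ with hzdef
  have hzpow : (w₂ / σ) ^ κ = z := div_pow w₂ σ κ
  have habs : ‖z‖ < 1 := by
    rw [← hzpow, norm_pow]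
    exact pow_lt_one₀ (norm_nonneg _) h1 hκ0
  have h1z : (1:ℂ) - z ≠ 0 := by
    intro h
    have hz1 : z = 1 := by linear_combination -h
    rw [hz1] at habs; simp at habs
  have hden : σ ^ κ - w₂ ^ κ ≠ 0 := by
    have hfac : σ ^ κ - w₂ ^ κ = σ ^ κ * (1 - z) := by
      rw [hzdef]; field_simp
    rw [hfac]
    exact mul_ne_zero hσκ h1z
  have hreα : ∀ s : ℕ, 0 < (α + (s:ℂ)).re := by
    intro s
    rw [Complex.add_re, Complex.natCast_re]
    have h0 : (0:ℝ) ≤ (s:ℝ) := Nat.cast_nonneg s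
    linarith
  have hreβ : ∀ r : ℕ, 0 < (β + (κ:ℂ) * (r:ℂ)).re := by
    intro r
    have hre : ((κ:ℂ) * (r:ℂ)).re = (κ:ℝ) * (r:ℝ) := by
      simp [Complex.mul_re]
    rw [Complex.add_re, hre]
    have h0 : (0:ℝ) ≤ (κ:ℝ) * (r:ℝ) := by positivity
    linarith
  have hΓα : ∀ s : ℕ, Complex.Gamma (α + (s:ℂ)) ≠ 0 := fun s =>
    Complex.Gamma_ne_zero_of_re_pos (hreα s)
  have hΓβ : ∀ r : ℕ, Complex.Gamma (β + (κ:ℂ) * (r:ℂ)) ≠ 0 := fun r =>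
    Complex.Gamma_ne_zero_of_re_pos (hreβ r)
  have hJ : ∀ X Y : ℂ, JKML α β (-(n:ℂ)) γ₂ κ X Y
      = ∑ s ∈ Finset.range (n+1), ∑ r ∈ Finset.range (n+1),
        pochC (-(n:ℂ)) (r + s) * pochC γ₂ s * X ^ s * Y ^ (κ * r) /
          (r.factorial * s.factorial * Complex.Gamma (α + s) *
            Complex.Gamma (β + κ * r)) := by
    intro X Y
    rw [JKML]
    have hin : ∀ s : ℕ,
        (∑' r : ℕ, pochC (-(n:ℂ)) (r + s) * pochC γ₂ s * X ^ s * Y ^ (κ * r) /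
          (r.factorial * s.factorial * Complex.Gamma (α + s) * Complex.Gamma (β + κ * r)))
        = ∑ r ∈ Finset.range (n+1),
            pochC (-(n:ℂ)) (r + s) * pochC γ₂ s * X ^ s * Y ^ (κ * r) /
          (r.factorial * s.factorial * Complex.Gamma (α + s) * Complex.Gamma (β + κ * r)) := by
      intro s
      apply tsum_eq_sum
      intro r hr
      rw [Finset.mem_range, not_lt] at hr
      rw [poch_zero_of_lt (show n < r + s by omega)]
      simp
    rw [tsum_congr hin]
    apply tsum_eq_sum
    intro s hs
    rw [Finset.mem_range, not_lt] at hs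
    apply Finset.sum_eq_zero
    intro r _
    rw [poch_zero_of_lt (show n < r + s by omega)]
    simp
  -- inner integral computation for u < y
  have houter : ∀ u : ℝ, u < y →
      (∫ t in Set.Iio x,
        ((x : ℂ) - t) ^ (α - 1) * ((y : ℂ) - u) ^ (β - 1) *
          JKML α β (-(n:ℂ)) γ₂ κ (w₁ * ((x : ℂ) - t)) (w₂ * ((y : ℂ) - u)) *
          Complex.exp (δ * t + σ * u))
      = ∑ s ∈ Finset.range (n+1), ∑ r ∈ Finset.range (n+1),
          (pochC (-(n:ℂ)) (r + s) * pochC γ₂ s * w₁ ^ s * w₂ ^ (κ * r) /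
            (r.factorial * s.factorial * Complex.Gamma (α + s) *
              Complex.Gamma (β + κ * r)) *
            (δ ^ (-(α + (s:ℂ))) * Complex.Gamma (α + (s:ℂ)) * Complex.exp (δ * x))) *
          (((y:ℂ) - u) ^ ((β + (κ:ℂ) * r) - 1) * Complex.exp (σ * u)) := by
    intro u hu
    have hBy : ((y:ℂ) - (u:ℂ)) ≠ 0 := by
      rw [show ((y:ℂ) - (u:ℂ)) = ((y - u : ℝ) : ℂ) by push_cast; ring]
      exact Complex.ofReal_ne_zero.mpr (sub_ne_zero.mpr (ne_of_gt hu))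
    calc (∫ t in Set.Iio x,
        ((x : ℂ) - t) ^ (α - 1) * ((y : ℂ) - u) ^ (β - 1) *
          JKML α β (-(n:ℂ)) γ₂ κ (w₁ * ((x : ℂ) - t)) (w₂ * ((y : ℂ) - u)) *
          Complex.exp (δ * t + σ * u))
        = ∫ t in Set.Iio x, ∑ s ∈ Finset.range (n+1), ∑ r ∈ Finset.range (n+1),
            (pochC (-(n:ℂ)) (r + s) * pochC γ₂ s * w₁ ^ s * w₂ ^ (κ * r) /
              (r.factorial * s.factorial * Complex.Gamma (α + s) *
                Complex.Gamma (β + κ * r)) *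
              (((y:ℂ) - u) ^ ((β + (κ:ℂ) * r) - 1) * Complex.exp (σ * u))) *
            (((x:ℂ) - t) ^ ((α + (s:ℂ)) - 1) * Complex.exp (δ * t)) := by
          apply setIntegral_congr_fun measurableSet_Iio
          intro t ht
          dsimp only
          rw [mem_Iio] at ht
          have hAx : ((x:ℂ) - (t:ℂ)) ≠ 0 := by
            rw [show ((x:ℂ) - (t:ℂ)) = ((x - t : ℝ) : ℂ) by push_cast; ring]
            exact Complex.ofReal_ne_zero.mpr (sub_ne_zero.mpr (ne_of_gt ht))
          rw [hJ, Finset.mul_sum, Finset.sum_mul]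
          apply Finset.sum_congr rfl
          intro s _
          rw [Finset.mul_sum, Finset.sum_mul]
          apply Finset.sum_congr rfl
          intro r _
          rw [← cpow_combine _ hAx α (s:ℂ) s rfl,
            ← cpow_combine _ hBy β ((κ:ℂ) * r) (κ * r) (by push_cast; ring),
            mul_pow w₁, mul_pow w₂, Complex.exp_add]
          ring
      _ = ∑ s ∈ Finset.range (n+1), ∑ r ∈ Finset.range (n+1), ∫ t in Set.Iio x,
            (pochC (-(n:ℂ)) (r + s) * pochC γ₂ s * w₁ ^ s * w₂ ^ (κ * r) /
              (r.factorial * s.factorial * Complex.Gamma (α + s) *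
                Complex.Gamma (β + κ * r)) *
              (((y:ℂ) - u) ^ ((β + (κ:ℂ) * r) - 1) * Complex.exp (σ * u))) *
            (((x:ℂ) - t) ^ ((α + (s:ℂ)) - 1) * Complex.exp (δ * t)) := by
          rw [integral_finset_sum _ (fun (s : ℕ) _ => integrable_finset_sum _ (fun (r : ℕ) _ =>
            ((L4_int (α + (s:ℂ)) (hreα s) δ hδ x).const_mul _)))]
          exact Finset.sum_congr rfl fun s _ => integral_finset_sum _ (fun (r : ℕ) _ =>
            ((L4_int (α + (s:ℂ)) (hreα s) δ hδ x).const_mul _))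
      _ = ∑ s ∈ Finset.range (n+1), ∑ r ∈ Finset.range (n+1),
          (pochC (-(n:ℂ)) (r + s) * pochC γ₂ s * w₁ ^ s * w₂ ^ (κ * r) /
            (r.factorial * s.factorial * Complex.Gamma (α + s) *
              Complex.Gamma (β + κ * r)) *
            (δ ^ (-(α + (s:ℂ))) * Complex.Gamma (α + (s:ℂ)) * Complex.exp (δ * x))) *
          (((y:ℂ) - u) ^ ((β + (κ:ℂ) * r) - 1) * Complex.exp (σ * u)) := by
          refine Finset.sum_congr rfl fun s _ => Finset.sum_congr rfl fun r _ => ?_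
          rw [integral_const_mul, L4 (α + (s:ℂ)) (hreα s) δ hδ x]
          ring
  -- outer integral
  calc (∫ u in Set.Iio y, ∫ t in Set.Iio x,
        ((x : ℂ) - t) ^ (α - 1) * ((y : ℂ) - u) ^ (β - 1) *
          JKML α β (-(n:ℂ)) γ₂ κ (w₁ * ((x : ℂ) - t)) (w₂ * ((y : ℂ) - u)) *
          Complex.exp (δ * t + σ * u))
      = ∫ u in Set.Iio y, ∑ s ∈ Finset.range (n+1), ∑ r ∈ Finset.range (n+1),
          (pochC (-(n:ℂ)) (r + s) * pochC γ₂ s * w₁ ^ s * w₂ ^ (κ * r) /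
            (r.factorial * s.factorial * Complex.Gamma (α + s) *
              Complex.Gamma (β + κ * r)) *
            (δ ^ (-(α + (s:ℂ))) * Complex.Gamma (α + (s:ℂ)) * Complex.exp (δ * x))) *
          (((y:ℂ) - u) ^ ((β + (κ:ℂ) * r) - 1) * Complex.exp (σ * u)) := by
        apply setIntegral_congr_fun measurableSet_Iio
        intro u hu
        dsimp only
        exact houter u (mem_Iio.mp hu)
    _ = ∑ s ∈ Finset.range (n+1), ∑ r ∈ Finset.range (n+1),
          (pochC (-(n:ℂ)) (r + s) * pochC γ₂ s * w₁ ^ s * w₂ ^ (κ * r) /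
            (r.factorial * s.factorial * Complex.Gamma (α + s) *
              Complex.Gamma (β + κ * r)) *
            (δ ^ (-(α + (s:ℂ))) * Complex.Gamma (α + (s:ℂ)) * Complex.exp (δ * x))) *
          (σ ^ (-(β + (κ:ℂ) * r)) * Complex.Gamma (β + (κ:ℂ) * r) * Complex.exp (σ * y)) := by
        rw [integral_finset_sum _ (fun (s : ℕ) _ => integrable_finset_sum _ (fun (r : ℕ) _ =>
          ((L4_int (β + (κ:ℂ) * r) (hreβ r) σ hσ y).const_mul _)))]
        refine Finset.sum_congr rfl fun s _ => ?_
        rw [integral_finset_sum _ (fun (r : ℕ) _ =>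
          ((L4_int (β + (κ:ℂ) * r) (hreβ r) σ hσ y).const_mul _))]
        refine Finset.sum_congr rfl fun r _ => ?_
        rw [integral_const_mul, L4 (β + (κ:ℂ) * r) (hreβ r) σ hσ y]
    _ = (δ ^ (-α) * σ ^ (-β) * Complex.exp (δ * x) * Complex.exp (σ * y)) *
          ∑ s ∈ Finset.range (n+1), ∑ r ∈ Finset.range (n+1),
            pochC (-(n:ℂ)) (r + s) * pochC γ₂ s / ((r.factorial : ℂ) * s.factorial) *
              (w₁ / δ) ^ s * z ^ r := by
        rw [Finset.mul_sum]
        refine Finset.sum_congr rfl fun s _ => ?_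
        rw [Finset.mul_sum]
        refine Finset.sum_congr rfl fun r _ => ?_
        rw [cpow_neg_add δ hδ0 α (s:ℂ) s rfl,
          cpow_neg_add σ hσ0 β ((κ:ℂ) * r) (κ * r) (by push_cast; ring)]
        have hfr : ((r.factorial : ℂ)) ≠ 0 := by exact_mod_cast r.factorial_ne_zero
        have hfs : ((s.factorial : ℂ)) ≠ 0 := by exact_mod_cast s.factorial_ne_zero
        have hδs : δ ^ s ≠ 0 := pow_ne_zero _ hδ0
        have hσr : σ ^ (κ * r) ≠ 0 := pow_ne_zero _ hσ0
        rw [cancel_aux (hΓα s) (hΓβ r) hfr hfs hδs hσr, hzdef]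
        ring
    _ = δ ^ (-α) * σ ^ (-β) * Complex.exp (δ * x + σ * y) *
        (1 - (w₂ / σ) ^ κ) ^ (-(-(n:ℂ))) *
        ∑' s : ℕ, pochC (-(n:ℂ)) s * pochC γ₂ s / s.factorial *
          (σ ^ κ * w₁ / (δ * (σ ^ κ - w₂ ^ κ))) ^ s := by
        rw [alg n γ₂ (w₁ / δ) z h1z]
        rw [hzpow, neg_neg, Complex.cpow_natCast]
        have htsum : (∑' s : ℕ, pochC (-(n:ℂ)) s * pochC γ₂ s / s.factorial *
            (σ ^ κ * w₁ / (δ * (σ ^ κ - w₂ ^ κ))) ^ s)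
            = ∑ s ∈ Finset.range (n+1), pochC (-(n:ℂ)) s * pochC γ₂ s / s.factorial *
              (σ ^ κ * w₁ / (δ * (σ ^ κ - w₂ ^ κ))) ^ s := by
          apply tsum_eq_sum
          intro s hs
          rw [Finset.mem_range, not_lt] at hs
          rw [poch_zero_of_lt (show n < s by omega)]
          simp
        rw [htsum]
        have hW : σ ^ κ * w₁ / (δ * (σ ^ κ - w₂ ^ κ)) = (w₁ / δ) / (1 - z) := by
          have hfac : σ ^ κ - w₂ ^ κ = σ ^ κ * (1 - z) := by rw [hzdef]; field_simp
          rw [hfac]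
          field_simp
        rw [hW, Complex.exp_add]
        ring
end
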